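/- For each s > −1, the set {H(ϑ; s) : ϑ ∈ 𝒮} coincides with the set of limit points of the sequence (H(η(N); s))_{N≥1}. Likewise, {K(ϑ) : ϑ ∈ 𝒮} and {R(ϑ) : ϑ ∈ 𝒮} coincide with the sets of limit points of the sequences (K(η(N)))_{N≥1} and (R(η(N)))_{N≥1}, respectively. -/

import Mathlib

open Filter Topology

noncomputable section

namespace GreedyEnergy

/-- Decreasing list `n₁ > n₂ > ⋯ > n_p` of the binary exponents of `N`,
so that `N = 2^{n₁} + ⋯ + 2^{n_p}` with `n₁ > n₂ > ⋯ > n_p ≥ 0`. -/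
def binExps (N : ℕ) : List ℕ :=
  ((List.range (N + 1)).filter fun i => N.testBit i).reverse

/-- The number `p = τ_b(N)` of ones in the binary expansion of `N`. -/
def pbin (N : ℕ) : ℕ := (binExps N).length

/-- `η(N)` viewed as an infinite sequence (0-indexed): the entry of index `k`
is `θ_{k+1} = 2^{n_{k+1}}/N` for `k < p`, and `0` for `k ≥ p`. -/
def eta (N : ℕ) : ℕ → ℝ :=
  fun k => ((binExps N).map fun n => (2 : ℝ) ^ n / (N : ℝ)).getD k 0

/-- `H(θ; s)` for a finite vector of length `p` given (0-indexed) by `θ : ℕ → ℝ`: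
`H(θ;s) = Σ_{k=1}^p θ_k^{s+1} + 2(2^s − 1) Σ_{k=1}^{p−1} θ_k^s Σ_{j=k+1}^p θ_j`. -/
def Hvec (θ : ℕ → ℝ) (p : ℕ) (s : ℝ) : ℝ :=
  (∑ k ∈ Finset.range p, θ k ^ (s + 1)) +
    2 * ((2 : ℝ) ^ s - 1) *
      ∑ k ∈ Finset.range p, θ k ^ s * ∑ j ∈ Finset.Ico (k + 1) p, θ j

/-- `K(θ) = 2 log 2 + Σ_{k=1}^p θ_k² log(θ_k/4) + 2 Σ_{k=1}^{p−1} (Σ_{j=k+1}^p θ_j) θ_k log θ_k`. -/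
def Kvec (θ : ℕ → ℝ) (p : ℕ) : ℝ :=
  2 * Real.log 2 + (∑ k ∈ Finset.range p, θ k ^ 2 * Real.log (θ k / 4)) +
    2 * ∑ k ∈ Finset.range p, (∑ j ∈ Finset.Ico (k + 1) p, θ j) * (θ k * Real.log (θ k))

/-- `R(θ) = −(2 log 2) Σ_{k=1}^p (k−1) θ_k − Σ_{k=1}^p θ_k log θ_k` (0-indexed: `k−1 ↦ k`). -/
def Rvec (θ : ℕ → ℝ) (p : ℕ) : ℝ :=
  -(2 * Real.log 2) * (∑ k ∈ Finset.range p, (k : ℝ) * θ k) -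
    ∑ k ∈ Finset.range p, θ k * Real.log (θ k)

/-- `G(θ; s) = Σ_{k=1}^p θ_k^s`. -/
def Gvec (θ : ℕ → ℝ) (p : ℕ) (s : ℝ) : ℝ := ∑ k ∈ Finset.range p, θ k ^ s

/-- `Λ(θ) = Σ_{k=1}^p θ_k log θ_k`. -/
def Λvec (θ : ℕ → ℝ) (p : ℕ) : ℝ := ∑ k ∈ Finset.range p, θ k * Real.log (θ k)

/-- `H(η(N); s)`. -/
def Heta (N : ℕ) (s : ℝ) : ℝ := Hvec (eta N) (pbin N) s

/-- `K(η(N))`. -/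
def Keta (N : ℕ) : ℝ := Kvec (eta N) (pbin N)

/-- `R(η(N))`. -/
def Reta (N : ℕ) : ℝ := Rvec (eta N) (pbin N)

/-- `G(η(N); s)`. -/
def Geta (N : ℕ) (s : ℝ) : ℝ := Gvec (eta N) (pbin N) s

/-- `Λ(η(N))`. -/
def Λeta (N : ℕ) : ℝ := Λvec (eta N) (pbin N)

/-- The set `𝒮` of infinite sequences `ϑ` for which there is a strictly increasing
sequence of positive integers `N_m` with `ϑ_j = lim_m (η(N_m))_j` for every `j`. -/
def Sset : Set (ℕ → ℝ) :=
  {ϑ | ∃ Nm : ℕ → ℕ, StrictMono Nm ∧ (∀ m, 1 ≤ Nm m) ∧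
        ∀ j, Tendsto (fun m => eta (Nm m) j) atTop (𝓝 (ϑ j))}

/-- `H(ϑ; s)` for an infinite sequence `ϑ` (0-indexed). The conventions
`ϑ_n log ϑ_n = 0` and `ϑ_n^s ϑ_j = 0` when `ϑ_n = 0` hold automatically,
since `Real.log 0 = 0` and `(0:ℝ) ^ s = 0` for `s ≠ 0` (and the factor
`2^s − 1` vanishes when `s = 0`). -/
def Hinf (ϑ : ℕ → ℝ) (s : ℝ) : ℝ :=
  (∑' n : ℕ, ϑ n ^ (s + 1)) +
    2 * ((2 : ℝ) ^ s - 1) * ∑' n : ℕ, ϑ n ^ s * ∑' j : ℕ, ϑ (n + 1 + j)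

/-- `K(ϑ)` for an infinite sequence `ϑ`. -/
def Kinf (ϑ : ℕ → ℝ) : ℝ :=
  2 * Real.log 2 + (∑' n : ℕ, ϑ n ^ 2 * Real.log (ϑ n / 4)) +
    2 * ∑' n : ℕ, (∑' j : ℕ, ϑ (n + 1 + j)) * (ϑ n * Real.log (ϑ n))

/-- `R(ϑ)` for an infinite sequence `ϑ` (0-indexed: `n−1 ↦ n`). -/
def Rinf (ϑ : ℕ → ℝ) : ℝ :=
  -(2 * Real.log 2) * (∑' n : ℕ, (n : ℝ) * ϑ n) - ∑' n : ℕ, ϑ n * Real.log (ϑ n)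

/-- The set of limit points of a real sequence: values of convergent subsequences. -/
def limitPoints (x : ℕ → ℝ) : Set ℝ :=
  {L | ∃ φ : ℕ → ℕ, StrictMono φ ∧ Tendsto (fun m => x (φ m)) atTop (𝓝 L)}

/-- The Riesz `s`-kernel: `k_s(z,w) = |z−w|^{−s}` for `s ≠ 0`, `k_0(z,w) = −log|z−w|`. -/
def kernel (s : ℝ) (z w : ℂ) : ℝ :=
  if s = 0 then -Real.log (‖z - w‖) else ‖z - w‖ ^ (-s)

/-- The Riesz `s`-energy `E_s(a_0, …, a_{N−1}) = Σ_{i ≠ j} k_s(a_i, a_j)`. -/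
def energy (s : ℝ) (a : ℕ → ℂ) (N : ℕ) : ℝ :=
  ∑ i ∈ Finset.range N, ∑ j ∈ Finset.range N,
    if i ≠ j then kernel s (a i) (a j) else 0

/-- The potential `U_{N,s}(z) = Σ_{ℓ=0}^{N−1} k_s(z, a_ℓ)`. -/
def pot (s : ℝ) (a : ℕ → ℂ) (N : ℕ) (z : ℂ) : ℝ :=
  ∑ l ∈ Finset.range N, kernel s z (a l)

/-- A greedy `s`-energy sequence on the unit circle: all points lie on `S¹`, and for
every `N ≥ 1` the point `a_N` minimizes (if `s ≥ 0`) resp. maximizes (if `s < 0`)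
the potential `U_{N,s}` over `S¹`. -/
def IsGreedy (s : ℝ) (a : ℕ → ℂ) : Prop :=
  (∀ n, ‖a n‖ = 1) ∧
    ∀ N, 1 ≤ N →
      ((0 ≤ s → ∀ z : ℂ, ‖z‖ = 1 → pot s a N (a N) ≤ pot s a N z) ∧
        (s < 0 → ∀ z : ℂ, ‖z‖ = 1 → pot s a N z ≤ pot s a N (a N)))

/-- `I_s(σ) = 2^{−s} Γ((1−s)/2) / (√π Γ(1 − s/2))`. -/
def Isigma (s : ℝ) : ℝ :=
  (2 : ℝ) ^ (-s) / Real.sqrt Real.pi * (Real.Gamma ((1 - s) / 2) / Real.Gamma (1 - s / 2))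

/-- The value `ζ(s)` of the Riemann zeta function at a real `s` (real part of the
analytically continued zeta function). -/
def zetaR (s : ℝ) : ℝ := (riemannZeta (s : ℂ)).re




-- sum of 2^i over bits below w equals N % 2^w
lemma sum_ite_testBit (N w : ℕ) :
    (∑ i ∈ Finset.range w, if N.testBit i then 2^i else 0) = N % 2^w := by
  induction w with
  | zero => simp [Nat.mod_one]
  | succ w ih =>
    rw [Finset.sum_range_succ, ih, pow_succ, Nat.mod_mul]
    have h : N.testBit w = decide (N / 2^w % 2 = 1) := Nat.testBit_eq_decide_div_mod_eq
    rcases Nat.mod_two_eq_zero_or_one (N / 2^w) with h2 | h2 <;> simp [h, h2]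

lemma binExps_sum (N : ℕ) : ((binExps N).map fun n => 2^n).sum = N := by
  have key : ∀ m : ℕ, (((List.range m).filter fun i => N.testBit i).map fun n => (2:ℕ)^n).sum
      = ∑ i ∈ Finset.range m, if N.testBit i then 2^i else 0 := by
    intro m
    induction m with
    | zero => simp
    | succ m ih =>
      rw [List.range_succ, List.filter_append, List.map_append, List.sum_append,
        Finset.sum_range_succ, ih]
      by_cases h : N.testBit m <;> simp [h]
  rw [binExps, List.map_reverse, List.sum_reverse, key, sum_ite_testBit]
  exact Nat.mod_eq_of_lt (lt_of_lt_of_le (Nat.lt_two_pow_self (n := N)) (Nat.pow_le_pow_right (by norm_num) (Nat.le_succ N)))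

lemma binExps_pairwise (N : ℕ) : (binExps N).Pairwise (· > ·) := by
  rw [binExps, List.pairwise_reverse]
  exact List.Pairwise.sublist List.filter_sublist List.pairwise_lt_range

lemma binExps_getElem_strict (N : ℕ) {i j : ℕ} (hij : i < j) (hj : j < (binExps N).length) :
    (binExps N)[j] < (binExps N)[i] :=
  List.pairwise_iff_getElem.1 (binExps_pairwise N) i j (hij.trans hj) hj hij

-- get j + (j - i) ≤ get i for i ≤ j
lemma binExps_getElem_le (N : ℕ) {i j : ℕ} (hij : i ≤ j) (hj : j < (binExps N).length) :
    (binExps N)[j] + (j - i) ≤ (binExps N)[i]'(lt_of_le_of_lt hij hj) := by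
  induction j with
  | zero => interval_cases i; simp
  | succ j ih =>
    rcases Nat.eq_or_lt_of_le hij with rfl | h
    · simp
    · have hj' : j < (binExps N).length := Nat.lt_of_succ_lt hj
      have h1 := ih (Nat.lt_succ_iff.1 h) hj'
      have h2 : (binExps N)[j+1] < (binExps N)[j] :=
        binExps_getElem_strict N (Nat.lt_succ_self j) hj
      omega

lemma two_pow_getElem_le (N : ℕ) {i : ℕ} (hi : i < (binExps N).length) :
    2 ^ (binExps N)[i] ≤ N := by
  have hmem : (2:ℕ) ^ (binExps N)[i] ∈ (binExps N).map fun n => 2^n :=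
    List.mem_map_of_mem (List.getElem_mem _)
  exact le_trans (List.single_le_sum (fun x _ => Nat.zero_le x) _ hmem) (le_of_eq (binExps_sum N))



lemma listsum_getD (l : List ℝ) : ∑ k ∈ Finset.range l.length, l.getD k 0 = l.sum := by
  induction l with
  | nil => simp
  | cons a l ih =>
    rw [List.length_cons, Finset.sum_range_succ']
    simp only [List.getD_cons_succ, List.getD_cons_zero, List.sum_cons, ih]
    ring

lemma eta_eq {N k : ℕ} (hk : k < pbin N) : eta N k = 2 ^ (binExps N)[k] / (N : ℝ) := by
  rw [eta, List.getD_eq_getElem _ _ (by simpa [pbin] using hk), List.getElem_map]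
  rfl

lemma eta_zero {N k : ℕ} (hk : pbin N ≤ k) : eta N k = 0 := by
  rw [eta, List.getD_eq_default]
  simpa [pbin] using hk

lemma eta_nonneg (N k : ℕ) : 0 ≤ eta N k := by
  rcases lt_or_ge k (pbin N) with h | h
  · rw [eta_eq h]; positivity
  · rw [eta_zero h]

lemma Npos_of_lt_pbin {N k : ℕ} (hk : k < pbin N) : 0 < N := by
  have := two_pow_getElem_le N (by simpa [pbin] using hk)
  have := Nat.two_pow_pos (binExps N)[k]
  omega

lemma eta_le_one {N k : ℕ} : eta N k ≤ 1 := by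
  rcases lt_or_ge k (pbin N) with h | h
  · rw [eta_eq h, div_le_one (by exact_mod_cast Npos_of_lt_pbin h)]
    exact_mod_cast two_pow_getElem_le N (by simpa [pbin] using h)
  · rw [eta_zero h]; norm_num

lemma eta_ratio {N : ℕ} {i j : ℕ} (hij : i ≤ j) :
    eta N j ≤ eta N i * (1/2 : ℝ) ^ (j - i) := by
  rcases lt_or_ge j (pbin N) with hj | hj
  · have hi : i < pbin N := lt_of_le_of_lt hij hj
    rw [eta_eq hj, eta_eq hi]
    have hN : (0:ℝ) < N := by exact_mod_cast Npos_of_lt_pbin hj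
    have key := binExps_getElem_le N hij (by simpa [pbin] using hj)
    rw [div_mul_eq_mul_div, div_le_div_iff₀ hN hN]
    have h2 : (2:ℝ) ^ (binExps N)[j]'(by simpa [pbin] using hj) * 2 ^ (j - i)
        ≤ 2 ^ (binExps N)[i]'(by simpa [pbin] using hi) := by
      rw [← pow_add]
      exact pow_le_pow_right₀ (by norm_num) key
    apply mul_le_mul_of_nonneg_right _ hN.le
    have e : (2:ℝ) ^ (binExps N)[i]'(by simpa [pbin] using hi) * (1/2)^(j-i)
        = 2 ^ (binExps N)[i]'(by simpa [pbin] using hi) / 2^(j-i) := by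
      rw [one_div, inv_pow, div_eq_mul_inv]
    rw [e, le_div_iff₀ (by positivity)]
    exact h2
  · rw [eta_zero hj]
    have := eta_nonneg N i
    positivity

lemma eta_le_geom (N k : ℕ) : eta N k ≤ (1/2 : ℝ) ^ k := by
  have := eta_ratio (N := N) (Nat.zero_le k)
  simp only [Nat.sub_zero] at this
  calc eta N k ≤ eta N 0 * (1/2:ℝ)^k := this
    _ ≤ 1 * (1/2:ℝ)^k := by
        apply mul_le_mul_of_nonneg_right eta_le_one; positivity
    _ = (1/2:ℝ)^k := one_mul _

lemma summable_geom_half : Summable (fun k : ℕ => (1/2 : ℝ) ^ k) :=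
  summable_geometric_of_lt_one (by norm_num) (by norm_num)

lemma eta_summable (N : ℕ) : Summable (eta N) :=
  Summable.of_nonneg_of_le (eta_nonneg N) (eta_le_geom N) summable_geom_half

-- finite tail bound, any upper limit m
lemma eta_tail_le {N i : ℕ} (m : ℕ) : ∑ j ∈ Finset.Ico (i+1) m, eta N j ≤ eta N i := by
  have h1 : ∀ j ∈ Finset.Ico (i+1) m, eta N j ≤ eta N i * (1/2:ℝ)^(j - i) := by
    intro j hj
    exact eta_ratio (le_of_lt (Finset.mem_Ico.1 hj).1)
  calc ∑ j ∈ Finset.Ico (i+1) m, eta N j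
      ≤ ∑ j ∈ Finset.Ico (i+1) m, eta N i * (1/2:ℝ)^(j-i) := Finset.sum_le_sum h1
    _ = eta N i * ∑ j ∈ Finset.Ico (i+1) m, (1/2:ℝ)^(j-i) := by rw [Finset.mul_sum]
    _ ≤ eta N i * 1 := by
        apply mul_le_mul_of_nonneg_left _ (eta_nonneg N i)
        rw [Finset.sum_Ico_eq_sum_range]
        have : ∀ d ∈ Finset.range (m - (i+1)), (1/2:ℝ)^(i+1+d-i) = (1/2)^(d+1) := by
          intro d _; congr 1; omega
        rw [Finset.sum_congr rfl this]
        have h2 : ∀ n : ℕ, ∑ d ∈ Finset.range n, (1/2:ℝ)^(d+1) = 1 - (1/2)^n := by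
          intro n
          induction n with
          | zero => simp
          | succ n ih => rw [Finset.sum_range_succ, ih]; ring
        rw [h2]
        have : (0:ℝ) ≤ (1/2)^(m-(i+1)) := by positivity
        linarith
    _ = eta N i := mul_one _

lemma eta_sum_eq_one {N : ℕ} (hN : 1 ≤ N) : ∑ k ∈ Finset.range (pbin N), eta N k = 1 := by
  have h0 : ∑ k ∈ Finset.range (pbin N), eta N k
      = ((binExps N).map fun n => (2:ℝ)^n/(N:ℝ)).sum := by
    rw [← listsum_getD]
    exact Finset.sum_congr (by simp [pbin]) (fun k _ => rfl)
  have h1 : ((binExps N).map fun n => (2:ℝ)^n/(N:ℝ)).sum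
      = ((binExps N).map fun n => (2:ℝ)^n).sum / N := by
    induction binExps N with
    | nil => simp
    | cons a l ih => simp only [List.map_cons, List.sum_cons, ih, add_div]
  have h2 : ((binExps N).map fun n => (2:ℝ)^n).sum = (N:ℝ) := by
    calc ((binExps N).map fun n => (2:ℝ)^n).sum
        = ((((binExps N).map fun n => (2:ℕ)^n).sum : ℕ) : ℝ) := by
          rw [Nat.cast_list_sum, List.map_map]
          apply congrArg
          apply List.map_congr_left
          intro n _
          simp
      _ = (N:ℝ) := by exact_mod_cast (binExps_sum N)
  rw [h0, h1, h2, div_self (Nat.cast_ne_zero.2 (by omega))]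



-- tsum tail equals finite Ico sum
lemma eta_tsum_tail (N a : ℕ) :
    ∑' j : ℕ, eta N (a + 1 + j) = ∑ j ∈ Finset.Ico (a+1) (pbin N), eta N j := by
  rw [Finset.sum_Ico_eq_sum_range]
  rw [tsum_eq_sum (s := Finset.range (pbin N - (a+1)))]
  intro b hb
  apply eta_zero
  simp only [Finset.mem_range, not_lt] at hb
  omega

lemma eta_tail_nonneg (N a : ℕ) : 0 ≤ ∑' j : ℕ, eta N (a + 1 + j) :=
  tsum_nonneg (fun j => eta_nonneg N _)

lemma eta_tail_le' (N a : ℕ) : ∑' j : ℕ, eta N (a + 1 + j) ≤ eta N a := by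
  rw [eta_tsum_tail]; exact eta_tail_le _

-- helper: sqrt of pow
lemma sqrt_pow' {x : ℝ} (hx : 0 ≤ x) (n : ℕ) : Real.sqrt (x ^ n) = Real.sqrt x ^ n := by
  rw [Real.sqrt_eq_rpow, Real.sqrt_eq_rpow, ← Real.rpow_natCast x n,
    ← Real.rpow_mul hx, mul_comm, Real.rpow_mul hx, Real.rpow_natCast]

-- helper: (x^n)^r = (x^r)^n  (x ≥ 0)
lemma pow_rpow_comm {x : ℝ} (hx : 0 ≤ x) (n : ℕ) (r : ℝ) :
    (x ^ n : ℝ) ^ r = (x ^ r) ^ n := by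
  rw [← Real.rpow_natCast x n, ← Real.rpow_mul hx, mul_comm, Real.rpow_mul hx,
    Real.rpow_natCast]

-- helper: |x log x| ≤ 2 √x for 0 ≤ x ≤ 1
lemma abs_mul_log_le_sqrt {x : ℝ} (h0 : 0 ≤ x) (h1 : x ≤ 1) :
    |x * Real.log x| ≤ 2 * Real.sqrt x := by
  rcases h0.eq_or_lt with rfl | hx
  · simp
  · have hlog : Real.log x ≤ 0 := Real.log_nonpos h0 h1
    have habs : |x * Real.log x| = x * (-Real.log x) := by
      rw [abs_of_nonpos (mul_nonpos_of_nonneg_of_nonpos h0 hlog)]; ring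
    rw [habs]
    have hsq : 0 < Real.sqrt x := Real.sqrt_pos.2 hx
    have h2 : -Real.log x = 2 * (-Real.log (Real.sqrt x)) := by
      rw [Real.log_sqrt h0]; ring
    have h3 : -Real.log (Real.sqrt x) = Real.log (Real.sqrt x)⁻¹ := (Real.log_inv _).symm
    have h4 : Real.log (Real.sqrt x)⁻¹ ≤ (Real.sqrt x)⁻¹ := by
      have := Real.log_le_sub_one_of_pos (inv_pos.2 hsq)
      linarith
    have h5 : x * (-Real.log x) ≤ x * (2 * (Real.sqrt x)⁻¹) := by
      apply mul_le_mul_of_nonneg_left _ h0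
      rw [h2, h3]
      linarith
    refine h5.trans (le_of_eq ?_)
    rw [← Real.div_sqrt (x := x)]
    field_simp
    exact Real.sq_sqrt h0

-- helper: |x log x| ≤ 1 for 0 ≤ x ≤ 1
lemma abs_mul_log_le_one {x : ℝ} (h0 : 0 ≤ x) (h1 : x ≤ 1) : |x * Real.log x| ≤ 1 := by
  rcases h0.eq_or_lt with rfl | hx
  · simp
  · rw [mul_comm]
    exact (Real.abs_log_mul_self_lt x hx h1).le

lemma sq_log_div_four_eq (x : ℝ) :
    x ^ 2 * Real.log (x / 4) = x * (x * Real.log x) - Real.log 4 * x ^ 2 := by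
  rcases eq_or_ne x 0 with rfl | hx
  · simp
  · rw [Real.log_div hx (by norm_num)]; ring



/-! ### Finite formulas agree with the infinite ones on `eta N` -/

lemma Hinf_eta (N : ℕ) {s : ℝ} (hs : -1 < s) : Hinf (eta N) s = Heta N s := by
  rw [Hinf, Heta, Hvec]
  congr 1
  · apply tsum_eq_sum
    intro n hn
    rw [eta_zero (by simpa using hn)]
    exact Real.zero_rpow (by linarith)
  · congr 1
    rw [tsum_eq_sum (s := Finset.range (pbin N))]
    · exact Finset.sum_congr rfl fun n _ => by rw [eta_tsum_tail]
    · intro n hn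
      simp only [Finset.mem_range, not_lt] at hn
      rw [eta_tsum_tail, Finset.Ico_eq_empty (by omega), Finset.sum_empty, mul_zero]

lemma Kinf_eta (N : ℕ) : Kinf (eta N) = Keta N := by
  rw [Kinf, Keta, Kvec]
  congr 1
  · congr 1
    apply tsum_eq_sum
    intro n hn
    rw [eta_zero (by simpa using hn)]
    simp
  · congr 1
    rw [tsum_eq_sum (s := Finset.range (pbin N))]
    · exact Finset.sum_congr rfl fun n _ => by rw [eta_tsum_tail]
    · intro n hn
      rw [eta_zero (by simpa using hn)]
      simp

lemma Rinf_eta (N : ℕ) : Rinf (eta N) = Reta N := by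
  rw [Rinf, Reta, Rvec]
  congr 1
  · congr 1
    apply tsum_eq_sum
    intro n hn
    rw [eta_zero (by simpa using hn)]
    simp
  · apply tsum_eq_sum
    intro n hn
    rw [eta_zero (by simpa using hn)]
    simp

/-! ### Main convergence lemmas -/

section Conv
variable {ϑ : ℕ → ℝ} {Nm : ℕ → ℕ}
  (hconv : ∀ k, Tendsto (fun m => eta (Nm m) k) atTop (𝓝 (ϑ k)))

include hconv

lemma theta_nonneg (k : ℕ) : 0 ≤ ϑ k :=
  le_of_tendsto_of_tendsto' tendsto_const_nhds (hconv k) (fun m => eta_nonneg _ _)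

lemma theta_le_geom (k : ℕ) : ϑ k ≤ (1/2:ℝ)^k :=
  le_of_tendsto_of_tendsto' (hconv k) tendsto_const_nhds (fun m => eta_le_geom _ _)

lemma theta_le_one (k : ℕ) : ϑ k ≤ 1 :=
  le_of_tendsto_of_tendsto' (hconv k) tendsto_const_nhds (fun m => eta_le_one)

lemma tail_tendsto (k : ℕ) :
    Tendsto (fun m => ∑' j : ℕ, eta (Nm m) (k + 1 + j)) atTop (𝓝 (∑' j : ℕ, ϑ (k + 1 + j))) := by
  apply tendsto_tsum_of_dominated_convergence (bound := fun j => (1/2:ℝ)^(k+1+j))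
  · exact ((summable_nat_add_iff (k+1)).2 summable_geom_half).congr (fun j => by rw [add_comm])
  · exact fun j => hconv (k+1+j)
  · filter_upwards with m j
    rw [Real.norm_eq_abs, abs_of_nonneg (eta_nonneg _ _)]
    exact eta_le_geom _ _

lemma theta_tail_nonneg (k : ℕ) : 0 ≤ ∑' j : ℕ, ϑ (k + 1 + j) :=
  tsum_nonneg fun j => theta_nonneg hconv _

lemma theta_tail_le (k : ℕ) : ∑' j : ℕ, ϑ (k + 1 + j) ≤ ϑ k :=
  le_of_tendsto_of_tendsto' (tail_tendsto hconv k) (hconv k) (fun m => eta_tail_le' _ _)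

-- first sum in H
lemma tendsto_H1 {s : ℝ} (hs : -1 < s) :
    Tendsto (fun m => ∑' n : ℕ, eta (Nm m) n ^ (s+1)) atTop
      (𝓝 (∑' n : ℕ, ϑ n ^ (s+1))) := by
  apply tendsto_tsum_of_dominated_convergence (bound := fun n => ((1/2:ℝ)^(s+1))^n)
  · apply summable_geometric_of_lt_one (by positivity)
    exact Real.rpow_lt_one (by norm_num) (by norm_num) (by linarith)
  · intro n
    exact ((Real.continuousAt_rpow_const (ϑ n) (s+1) (Or.inr (by linarith))).tendsto).comp
      (hconv n)
  · filter_upwards with m n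
    rw [Real.norm_eq_abs, abs_of_nonneg (Real.rpow_nonneg (eta_nonneg _ _) _),
      ← pow_rpow_comm (by norm_num : (0:ℝ) ≤ 1/2)]
    exact Real.rpow_le_rpow (eta_nonneg _ _) (eta_le_geom _ _) (by linarith)

-- second sum in H
lemma tendsto_H2 {s : ℝ} (hs : -1 < s) :
    Tendsto (fun m => ∑' n : ℕ, eta (Nm m) n ^ s * ∑' j : ℕ, eta (Nm m) (n + 1 + j)) atTop
      (𝓝 (∑' n : ℕ, ϑ n ^ s * ∑' j : ℕ, ϑ (n + 1 + j))) := by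
  have hbd : ∀ (M : ℕ) (n : ℕ),
      eta M n ^ s * (∑' j : ℕ, eta M (n + 1 + j)) ≤ eta M n ^ (s+1) := by
    intro M n
    rcases (eta_nonneg M n).eq_or_lt with h0 | h0
    · rcases eq_or_ne s 0 with rfl | hs0
      · rw [Real.rpow_zero, one_mul]
        calc ∑' j : ℕ, eta M (n+1+j) ≤ eta M n := eta_tail_le' M n
          _ = eta M n ^ ((0:ℝ)+1) := by rw [zero_add, Real.rpow_one]
      · rw [← h0, Real.zero_rpow hs0, zero_mul]
        exact Real.rpow_nonneg le_rfl _
    · calc eta M n ^ s * (∑' j : ℕ, eta M (n + 1 + j))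
          ≤ eta M n ^ s * eta M n := by
            apply mul_le_mul_of_nonneg_left (eta_tail_le' M n) (Real.rpow_nonneg h0.le _)
        _ = eta M n ^ (s+1) := by rw [Real.rpow_add h0 s 1, Real.rpow_one]
  have hterm_nonneg : ∀ (M : ℕ) (n : ℕ),
      0 ≤ eta M n ^ s * (∑' j : ℕ, eta M (n + 1 + j)) :=
    fun M n => mul_nonneg (Real.rpow_nonneg (eta_nonneg _ _) _) (eta_tail_nonneg _ _)
  apply tendsto_tsum_of_dominated_convergence (bound := fun n => ((1/2:ℝ)^(s+1))^n)
  · apply summable_geometric_of_lt_one (by positivity)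
    exact Real.rpow_lt_one (by norm_num) (by norm_num) (by linarith)
  · intro n
    rcases eq_or_ne s 0 with rfl | hs0
    · simp only [Real.rpow_zero, one_mul]
      exact tail_tendsto hconv n
    rcases (theta_nonneg hconv n).eq_or_lt with h0 | h0
    · rw [← h0, Real.zero_rpow hs0, zero_mul]
      apply squeeze_zero (fun m => hterm_nonneg _ _) (fun m => hbd _ _)
      have h1 : Tendsto (fun m => eta (Nm m) n ^ (s+1)) atTop (𝓝 (ϑ n ^ (s+1))) :=
        ((Real.continuousAt_rpow_const (ϑ n) (s+1) (Or.inr (by linarith))).tendsto).comp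
          (hconv n)
      rw [← h0, Real.zero_rpow (by linarith : s+1 ≠ 0)] at h1
      exact h1
    · exact (((Real.continuousAt_rpow_const (ϑ n) s (Or.inl h0.ne')).tendsto).comp
        (hconv n)).mul (tail_tendsto hconv n)
  · filter_upwards with m n
    rw [Real.norm_eq_abs, abs_of_nonneg (hterm_nonneg _ _),
      ← pow_rpow_comm (by norm_num : (0:ℝ) ≤ 1/2)]
    exact (hbd _ _).trans
      (Real.rpow_le_rpow (eta_nonneg _ _) (eta_le_geom _ _) (by linarith))

lemma tendsto_Heta {s : ℝ} (hs : -1 < s) :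
    Tendsto (fun m => Heta (Nm m) s) atTop (𝓝 (Hinf ϑ s)) := by
  have : Tendsto (fun m => Hinf (eta (Nm m)) s) atTop (𝓝 (Hinf ϑ s)) := by
    unfold Hinf
    exact (tendsto_H1 hconv hs).add (((tendsto_H2 hconv hs)).const_mul _)
  exact this.congr (fun m => Hinf_eta _ hs)

-- K sums
lemma tendsto_K1 :
    Tendsto (fun m => ∑' n : ℕ, eta (Nm m) n ^ 2 * Real.log (eta (Nm m) n / 4)) atTop
      (𝓝 (∑' n : ℕ, ϑ n ^ 2 * Real.log (ϑ n / 4))) := by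
  have hcont : Continuous fun x : ℝ => x ^ 2 * Real.log (x / 4) := by
    have : (fun x : ℝ => x ^ 2 * Real.log (x / 4))
        = fun x : ℝ => x * (x * Real.log x) - Real.log 4 * x ^ 2 := by
      funext x; exact sq_log_div_four_eq x
    rw [this]
    exact (continuous_id.mul Real.continuous_mul_log).sub
      (continuous_const.mul (continuous_pow 2))
  apply tendsto_tsum_of_dominated_convergence
    (bound := fun n => (1 + Real.log 4) * (1/2:ℝ)^n)
  · exact summable_geom_half.mul_left _
  · exact fun n => (hcont.tendsto _).comp (hconv n)
  · filter_upwards with m n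
    set x := eta (Nm m) n with hx
    have h0 : 0 ≤ x := eta_nonneg _ _
    have h1 : x ≤ 1 := eta_le_one
    rw [Real.norm_eq_abs, sq_log_div_four_eq]
    have hlog4 : (0:ℝ) ≤ Real.log 4 := Real.log_nonneg (by norm_num)
    calc |x * (x * Real.log x) - Real.log 4 * x ^ 2|
        ≤ |x * (x * Real.log x)| + |Real.log 4 * x ^ 2| := abs_sub _ _
      _ ≤ x * 1 + Real.log 4 * x := by
          apply add_le_add
          · rw [abs_mul, abs_of_nonneg h0]
            exact mul_le_mul_of_nonneg_left (abs_mul_log_le_one h0 h1) h0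
          · rw [abs_mul, abs_of_nonneg hlog4, abs_of_nonneg (by positivity : (0:ℝ) ≤ x^2)]
            apply mul_le_mul_of_nonneg_left _ hlog4
            calc x^2 = x * x := sq x
              _ ≤ 1 * x := mul_le_mul_of_nonneg_right h1 h0
              _ = x := one_mul x
      _ = (1 + Real.log 4) * x := by ring
      _ ≤ (1 + Real.log 4) * (1/2)^n := by
          apply mul_le_mul_of_nonneg_left (eta_le_geom _ _) (by linarith)

lemma tendsto_K2 :
    Tendsto (fun m => ∑' n : ℕ, (∑' j : ℕ, eta (Nm m) (n + 1 + j)) *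
        (eta (Nm m) n * Real.log (eta (Nm m) n))) atTop
      (𝓝 (∑' n : ℕ, (∑' j : ℕ, ϑ (n + 1 + j)) * (ϑ n * Real.log (ϑ n)))) := by
  apply tendsto_tsum_of_dominated_convergence (bound := fun n => (1/2:ℝ)^n)
  · exact summable_geom_half
  · intro n
    exact (tail_tendsto hconv n).mul ((Real.continuous_mul_log.tendsto _).comp (hconv n))
  · filter_upwards with m n
    rw [Real.norm_eq_abs, abs_mul]
    calc |∑' j : ℕ, eta (Nm m) (n+1+j)| * |eta (Nm m) n * Real.log (eta (Nm m) n)|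
        ≤ (1/2:ℝ)^n * 1 := by
          apply mul_le_mul
          · rw [abs_of_nonneg (eta_tail_nonneg _ _)]
            exact (eta_tail_le' _ _).trans (eta_le_geom _ _)
          · exact abs_mul_log_le_one (eta_nonneg _ _) eta_le_one
          · exact abs_nonneg _
          · positivity
      _ = (1/2:ℝ)^n := mul_one _

lemma tendsto_Keta :
    Tendsto (fun m => Keta (Nm m)) atTop (𝓝 (Kinf ϑ)) := by
  have : Tendsto (fun m => Kinf (eta (Nm m))) atTop (𝓝 (Kinf ϑ)) := by
    unfold Kinf
    exact ((tendsto_const_nhds.add (tendsto_K1 hconv)).add ((tendsto_K2 hconv).const_mul _))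
  exact this.congr (fun m => Kinf_eta _)

-- R sums
lemma tendsto_R1 :
    Tendsto (fun m => ∑' n : ℕ, (n:ℝ) * eta (Nm m) n) atTop
      (𝓝 (∑' n : ℕ, (n:ℝ) * ϑ n)) := by
  apply tendsto_tsum_of_dominated_convergence (bound := fun n : ℕ => (n:ℝ) * (1/2:ℝ)^n)
  · simpa using summable_pow_mul_geometric_of_norm_lt_one (R := ℝ) 1 (r := 1/2) (by norm_num)
  · exact fun n => (hconv n).const_mul _
  · filter_upwards with m n
    rw [Real.norm_eq_abs, abs_mul, Nat.abs_cast, abs_of_nonneg (eta_nonneg _ _)]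
    exact mul_le_mul_of_nonneg_left (eta_le_geom _ _) (Nat.cast_nonneg n)

lemma tendsto_R2 :
    Tendsto (fun m => ∑' n : ℕ, eta (Nm m) n * Real.log (eta (Nm m) n)) atTop
      (𝓝 (∑' n : ℕ, ϑ n * Real.log (ϑ n))) := by
  apply tendsto_tsum_of_dominated_convergence
    (bound := fun n => 2 * (Real.sqrt (1/2))^n)
  · apply Summable.mul_left
    apply summable_geometric_of_lt_one (Real.sqrt_nonneg _)
    rw [show (1:ℝ) = Real.sqrt 1 by simp]
    exact Real.sqrt_lt_sqrt (by norm_num) (by norm_num)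
  · exact fun n => (Real.continuous_mul_log.tendsto _).comp (hconv n)
  · filter_upwards with m n
    rw [Real.norm_eq_abs]
    calc |eta (Nm m) n * Real.log (eta (Nm m) n)|
        ≤ 2 * Real.sqrt (eta (Nm m) n) := abs_mul_log_le_sqrt (eta_nonneg _ _) eta_le_one
      _ ≤ 2 * (Real.sqrt (1/2))^n := by
          apply mul_le_mul_of_nonneg_left _ (by norm_num)
          rw [← sqrt_pow' (by norm_num : (0:ℝ) ≤ 1/2)]
          exact Real.sqrt_le_sqrt (eta_le_geom _ _)

lemma tendsto_Reta :
    Tendsto (fun m => Reta (Nm m)) atTop (𝓝 (Rinf ϑ)) := by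
  have : Tendsto (fun m => Rinf (eta (Nm m))) atTop (𝓝 (Rinf ϑ)) := by
    unfold Rinf
    exact ((tendsto_R1 hconv).const_mul _).sub (tendsto_R2 hconv)
  exact this.congr (fun m => Rinf_eta _)

end Conv


lemma exists_subseq_conv (M : ℕ → ℕ) :
    ∃ ψ : ℕ → ℕ, StrictMono ψ ∧ ∃ ϑ : ℕ → ℝ,
      ∀ k, Tendsto (fun m => eta (M (ψ m)) k) atTop (𝓝 (ϑ k)) := by
  have hcomp : IsCompact (Set.univ.pi fun _ : ℕ => Set.Icc (0:ℝ) 1) :=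
    isCompact_univ_pi fun _ => isCompact_Icc
  have hmem : ∀ m, eta (M m) ∈ (Set.univ.pi fun _ : ℕ => Set.Icc (0:ℝ) 1) := by
    intro m
    rw [Set.mem_univ_pi]
    exact fun k => ⟨eta_nonneg _ _, eta_le_one⟩
  obtain ⟨a, -, ψ, hψ, ha⟩ := hcomp.tendsto_subseq hmem
  exact ⟨ψ, hψ, a, fun k => tendsto_pi_nhds.1 ha k⟩

lemma sets_eq (F : (ℕ → ℝ) → ℝ) (Fη : ℕ → ℝ)
    (hcont : ∀ (Nm : ℕ → ℕ) (ϑ : ℕ → ℝ),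
      (∀ k, Tendsto (fun m => eta (Nm m) k) atTop (𝓝 (ϑ k))) →
      Tendsto (fun m => Fη (Nm m)) atTop (𝓝 (F ϑ))) :
    {x : ℝ | ∃ ϑ ∈ Sset, F ϑ = x} = limitPoints (fun N => Fη (N + 1)) := by
  ext L
  constructor
  · rintro ⟨ϑ, ⟨Nm, hmono, hone, hconv⟩, rfl⟩
    refine ⟨fun m => Nm m - 1, ?_, ?_⟩
    · intro a b hab
      have h1 := hmono hab
      have h2 := hone a
      show Nm a - 1 < Nm b - 1
      omega
    · have he : ∀ m, Nm m - 1 + 1 = Nm m := fun m => by have := hone m; omega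
      have := hcont Nm ϑ hconv
      exact this.congr (fun m => by show Fη (Nm m) = Fη (Nm m - 1 + 1); rw [he m])
  · rintro ⟨φ, hφ, hL⟩
    obtain ⟨ψ, hψ, ϑ, hϑ⟩ := exists_subseq_conv (fun m => φ m + 1)
    refine ⟨ϑ, ⟨fun m => φ (ψ m) + 1, ?_, fun m => by show 1 ≤ φ (ψ m) + 1; omega, hϑ⟩, ?_⟩
    · intro a b hab
      have h1 := hφ (hψ hab)
      show φ (ψ a) + 1 < φ (ψ b) + 1
      omega
    · have h1 : Tendsto (fun m => Fη (φ (ψ m) + 1)) atTop (𝓝 (F ϑ)) :=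
        hcont (fun m => φ (ψ m) + 1) ϑ hϑ
      have h2 : Tendsto (fun m => Fη (φ (ψ m) + 1)) atTop (𝓝 L) :=
        hL.comp hψ.tendsto_atTop
      exact tendsto_nhds_unique h1 h2


theorem stmt6 (s : ℝ) (hs : -1 < s) :
    {x : ℝ | ∃ ϑ ∈ Sset, Hinf ϑ s = x} = limitPoints (fun N => Heta (N + 1) s) ∧
    {x : ℝ | ∃ ϑ ∈ Sset, Kinf ϑ = x} = limitPoints (fun N => Keta (N + 1)) ∧
    {x : ℝ | ∃ ϑ ∈ Sset, Rinf ϑ = x} = limitPoints (fun N => Reta (N + 1)) := by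
  refine ⟨?_, ?_, ?_⟩
  · exact sets_eq (fun ϑ => Hinf ϑ s) (fun N => Heta N s) (fun Nm ϑ h => tendsto_Heta h hs)
  · exact sets_eq Kinf Keta (fun Nm ϑ h => tendsto_Keta h)
  · exact sets_eq Rinf Reta (fun Nm ϑ h => tendsto_Reta h)

end GreedyEnergy
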